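/- Let m be an odd positive integer and let (X^m − 1)/(X − 1) = p_1(X) ⋯ p_h(X) be the factorization into distinct irreducible polynomials in (Z/2)[X], with d_j = deg p_j(X). Then the number of pairs (a(X), b(X)) ∈ J_m × J_m such that gcd(a(X), b(X), X^m − 1) = X − 1 (equivalently, no p_j divides both a(X) and b(X)) equals 2^{2(m−1)} · ∏_{j=1}^{h} (1 − 2^{−2 d_j}). -/

import Mathlib

open Polynomial

noncomputable section

/-- The polynomial `X^m - 1` over `Z/2`. -/
def fm (m : ℕ) : Polynomial (ZMod 2) := X ^ m - 1

/-- The polynomial `X^m - 1` over `Z/4`. -/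
def fm4 (m : ℕ) : Polynomial (ZMod 4) := X ^ m - 1

/-- `R_m = (Z/2)[X]/⟨X^m - 1⟩`. -/
abbrev R2 (m : ℕ) : Type := Polynomial (ZMod 2) ⧸ Ideal.span {fm m}

/-- `R'_m = (Z/4)[X]/⟨X^m - 1⟩`. -/
abbrev R4 (m : ℕ) : Type := Polynomial (ZMod 4) ⧸ Ideal.span {fm4 m}

def mk2 (m : ℕ) : Polynomial (ZMod 2) →+* R2 m := Ideal.Quotient.mk _

def mk4 (m : ℕ) : Polynomial (ZMod 4) →+* R4 m := Ideal.Quotient.mk _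

/-- The canonical representative (of degree `< m`) of an element of `R2 m`. -/
def rep2 (m : ℕ) (r : R2 m) : Polynomial (ZMod 2) :=
  (Function.surjInv (Ideal.Quotient.mk_surjective (I := Ideal.span {fm m})) r) %ₘ fm m

/-- The canonical representative (of degree `< m`) of an element of `R4 m`. -/
def rep4 (m : ℕ) (r : R4 m) : Polynomial (ZMod 4) :=
  (Function.surjInv (Ideal.Quotient.mk_surjective (I := Ideal.span {fm4 m})) r) %ₘ fm4 m

/-- Coefficientwise doubling map `(Z/2)[X] → (Z/4)[X]`, `a ↦ 2a` on each coefficient. -/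
def polyDbl (p : Polynomial (ZMod 2)) : Polynomial (ZMod 4) :=
  ∑ i ∈ p.support, Polynomial.C (2 * ((p.coeff i).val : ZMod 4)) * X ^ i

/-- The additive embedding `R_m → R'_m`, `f ↦ 2f`. -/
def iota (m : ℕ) (r : R2 m) : R4 m := mk4 m (polyDbl (rep2 m r))

/-- Hamming weight of an element of `R_m` (of its coefficient vector). -/
def wt2 (m : ℕ) (r : R2 m) : ℕ := (rep2 m r).support.card

/-- Lee weight of an element of `Z/4`. -/
def lee (x : ZMod 4) : ℕ := min x.val (4 - x.val)

/-- Lee weight of an element of `R'_m` (of its coefficient vector). -/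
def wtLee (m : ℕ) (r : R4 m) : ℕ := ∑ i ∈ (rep4 m r).support, lee ((rep4 m r).coeff i)

/-- The augmentation ideal `J_m = ⟨X - 1⟩` of `R_m`. -/
def Jm (m : ℕ) : Ideal (R2 m) := Ideal.span {mk2 m (X - 1)}

/-- The `Z2Z4`-additive cyclic code `C_{a,b} = {(f·a, 2(f·b)) : f ∈ R_m}`. -/
def Cab (m : ℕ) (a b : R2 m) : Set (R2 m × R4 m) :=
  {w | ∃ f : R2 m, w = (f * a, iota m (f * b))}

/-- Dimension of `C_{a,b}` as a vector space over `Z/2`, i.e. `log₂ |C_{a,b}|`. -/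
def dimCab (m : ℕ) (a b : R2 m) : ℕ := Nat.log 2 (Nat.card (Cab m a b))

/-- `(X^m - 1)/(X - 1) = X^{m-1} + ⋯ + X + 1` over `Z/2`. -/
def geomPoly (m : ℕ) : Polynomial (ZMod 2) := ∑ i ∈ Finset.range m, X ^ i

/-- `ℓ_m`: minimal degree of the irreducible factors of `(X^m-1)/(X-1)` in `(Z/2)[X]`. -/
def ell (m : ℕ) : ℕ :=
  sInf {d | ∃ p : Polynomial (ZMod 2), Irreducible p ∧ p ∣ geomPoly m ∧ p.natDegree = d}

/-- The binary entropy function `H(x) = -x·log₂x - (1-x)·log₂(1-x)`. -/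
def Hent (x : ℝ) : ℝ := -(x * Real.logb 2 x) - (1 - x) * Real.logb 2 (1 - x)


namespace Statement13Aux

lemma zmod2_eq_one {x : ZMod 2} (hx : x ≠ 0) : x = 1 := by
  have h : ∀ y : ZMod 2, y ≠ 0 → y = 1 := by decide
  exact h x hx

lemma eq_of_associated {a b : Polynomial (ZMod 2)} (hab : Associated a b) : a = b := by
  obtain ⟨u, rfl⟩ := hab
  obtain ⟨r, hr, hC⟩ := Polynomial.isUnit_iff.mp u.isUnit
  have hr1 : r = 1 := zmod2_eq_one hr.ne_zero
  subst hr1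
  rw [← hC, map_one, mul_one]

lemma monic_of_ne_zero {g : Polynomial (ZMod 2)} (hg : g ≠ 0) : g.Monic :=
  zmod2_eq_one (Polynomial.leadingCoeff_ne_zero.mpr hg)

lemma fm_eq (m : ℕ) : fm m = (X - 1) * geomPoly m := by
  rw [fm, geomPoly, mul_comm, geom_sum_mul]

lemma X_sub_one_not_dvd {m : ℕ} (hm : Odd m) :
    ¬ (X - 1 : Polynomial (ZMod 2)) ∣ geomPoly m := by
  have hC : (X - 1 : Polynomial (ZMod 2)) = X - C 1 := by rw [Polynomial.C_1]
  rw [hC, Polynomial.dvd_iff_isRoot]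
  intro hroot
  have : (geomPoly m).eval 1 = 0 := hroot
  rw [geomPoly] at this
  simp only [Polynomial.eval_finset_sum, Polynomial.eval_pow, Polynomial.eval_X, one_pow,
    Finset.sum_const, Finset.card_range, nsmul_eq_mul, mul_one] at this
  rw [← ZMod.natCast_mod m 2, Nat.odd_iff.mp hm] at this
  simp at this

lemma pj_ne_X_sub_one {m h : ℕ} (hm : Odd m) {p : Fin h → Polynomial (ZMod 2)}
    (hirr : ∀ j, Irreducible (p j)) (hfact : ∏ j, p j = geomPoly m) (j : Fin h) :
    ¬ p j ∣ (X - 1 : Polynomial (ZMod 2)) := by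
  intro hdvd
  have hassoc : Associated (p j) (X - 1) := by
    have hXirr : Irreducible (X - 1 : Polynomial (ZMod 2)) := by
      have : (X - 1 : Polynomial (ZMod 2)) = X - C 1 := by rw [Polynomial.C_1]
      rw [this]; exact Polynomial.irreducible_X_sub_C 1
    exact (hirr j).associated_of_dvd hXirr hdvd
  have : p j = X - 1 := eq_of_associated hassoc
  apply X_sub_one_not_dvd hm (m := m)
  rw [← this, ← hfact]
  exact Finset.dvd_prod_of_mem _ (Finset.mem_univ j)

lemma gcd_char {m h : ℕ} (hm : Odd m) {p : Fin h → Polynomial (ZMod 2)}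
    (hirr : ∀ j, Irreducible (p j)) (hfact : ∏ j, p j = geomPoly m)
    (a b : Polynomial (ZMod 2)) :
    EuclideanDomain.gcd a (EuclideanDomain.gcd b (fm m)) = X - 1 ↔
      ((X - 1) ∣ a ∧ (X - 1) ∣ b ∧ ∀ j, ¬(p j ∣ a ∧ p j ∣ b)) := by
  set g := EuclideanDomain.gcd a (EuclideanDomain.gcd b (fm m)) with hg
  have hga : g ∣ a := EuclideanDomain.gcd_dvd_left _ _
  have hgb : g ∣ b := (EuclideanDomain.gcd_dvd_right _ _).trans
    (EuclideanDomain.gcd_dvd_left _ _)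
  have hgf : g ∣ fm m := (EuclideanDomain.gcd_dvd_right _ _).trans
    (EuclideanDomain.gcd_dvd_right _ _)
  constructor
  · intro heq
    refine ⟨heq ▸ hga, heq ▸ hgb, fun j ⟨hja, hjb⟩ => ?_⟩
    have hjf : p j ∣ fm m := by
      rw [fm_eq, ← hfact]
      exact Dvd.dvd.mul_left (Finset.dvd_prod_of_mem _ (Finset.mem_univ j)) _
    have : p j ∣ g := EuclideanDomain.dvd_gcd hja (EuclideanDomain.dvd_gcd hjb hjf)
    rw [heq] at this
    exact pj_ne_X_sub_one hm hirr hfact j this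
  · rintro ⟨hXa, hXb, hnot⟩
    have hXf : (X - 1 : Polynomial (ZMod 2)) ∣ fm m := ⟨geomPoly m, fm_eq m⟩
    have hXg : (X - 1) ∣ g :=
      EuclideanDomain.dvd_gcd hXa (EuclideanDomain.dvd_gcd hXb hXf)
    have hgX : g ∣ (X - 1) := by
      have hcop : IsCoprime g (∏ j, p j) := by
        apply IsCoprime.prod_right
        intro j _
        have hndvd : ¬ p j ∣ g := fun hpg =>
          hnot j ⟨hpg.trans hga, hpg.trans hgb⟩
        exact ((hirr j).coprime_iff_not_dvd.mpr hndvd).symm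
      apply hcop.dvd_of_dvd_mul_right
      rwa [hfact, ← fm_eq]
    exact eq_of_associated (associated_of_dvd_dvd hgX hXg)

lemma fm_monic {m : ℕ} (hm : 0 < m) : (fm m).Monic := by
  rw [fm, ← Polynomial.C_1]
  exact Polynomial.monic_X_pow_sub_C 1 hm.ne'

lemma mk2_rep2 {m : ℕ} (hm : 0 < m) (r : R2 m) : mk2 m (rep2 m r) = r := by
  rw [rep2, Polynomial.modByMonic_eq_sub_mul_div _ (fm m), map_sub]
  have h0 : mk2 m (fm m * (Function.surjInv
      (Ideal.Quotient.mk_surjective (I := Ideal.span {fm m})) r /ₘ fm m)) = 0 := by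
    rw [mk2, Ideal.Quotient.eq_zero_iff_mem]
    exact Ideal.mul_mem_right _ _ (Ideal.subset_span rfl)
  rw [h0, sub_zero, mk2]
  exact Function.surjInv_eq _ r

lemma mem_Jm_iff {m : ℕ} (hm : 0 < m) (r : R2 m) :
    r ∈ Jm m ↔ (X - 1) ∣ rep2 m r := by
  have hmap : Jm m = Ideal.map (mk2 m) (Ideal.span {(X - 1 : Polynomial (ZMod 2))}) := by
    rw [Jm, Ideal.map_span, Set.image_singleton]
  constructor
  · intro hr
    rw [hmap] at hr
    obtain ⟨x, hxI, hxr⟩ :=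
      (Ideal.mem_map_iff_of_surjective _ Ideal.Quotient.mk_surjective).mp hr
    rw [Ideal.mem_span_singleton] at hxI
    have hsub : fm m ∣ (x - rep2 m r) := by
      rw [← Ideal.mem_span_singleton]
      exact (Ideal.Quotient.eq).mp (hxr.trans (mk2_rep2 hm r).symm)
    have hXf : (X - 1 : Polynomial (ZMod 2)) ∣ fm m := ⟨geomPoly m, fm_eq m⟩
    have h2 := dvd_sub hxI (dvd_trans hXf hsub)
    simpa using h2
  · intro hdvd
    obtain ⟨c, hc⟩ := hdvd
    rw [← mk2_rep2 hm r, hc, map_mul, Jm]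
    exact Ideal.mem_span_singleton.mpr ⟨mk2 m c, rfl⟩

end Statement13Aux

/-- If `(X^m-1)/(X-1) = p_1 ⋯ p_h` with distinct irreducible `p_j` of
degrees `d_j` over `Z/2`, then the number of pairs `(a,b) ∈ J_m × J_m` with
`gcd(a, b, X^m - 1) = X - 1` equals `2^{2(m-1)} · ∏_j (1 - 2^{-2 d_j})`. -/
theorem statement13 (m : ℕ) (hm : Odd m) (hmpos : 0 < m)
    (h : ℕ) (p : Fin h → Polynomial (ZMod 2))
    (hirr : ∀ j, Irreducible (p j)) (hdist : Function.Injective p)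
    (hfact : ∏ j, p j = geomPoly m) :
    (Nat.card {w : R2 m × R2 m // w.1 ∈ Jm m ∧ w.2 ∈ Jm m ∧
        EuclideanDomain.gcd (rep2 m w.1) (EuclideanDomain.gcd (rep2 m w.2) (fm m))
          = X - 1} : ℝ)
      = (2 : ℝ) ^ (2 * (m - 1) : ℕ) *
          ∏ j, (1 - (2 : ℝ) ^ (-(2 * ((p j).natDegree : ℝ)))) := by
  classical
  open Statement13Aux in
  -- sum of degrees
  have hd_sum : ∑ j, (p j).natDegree = m - 1 := by
    have h1 : (∏ j, p j).natDegree = ∑ j, (p j).natDegree :=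
      Polynomial.natDegree_prod _ _ (fun j _ => (hirr j).ne_zero)
    rw [hfact] at h1
    have hgne : geomPoly m ≠ 0 := by
      intro h0
      exact Statement13Aux.X_sub_one_not_dvd hm (h0 ▸ dvd_zero _)
    have hXC : (X - 1 : Polynomial (ZMod 2)) = X - C 1 := by rw [Polynomial.C_1]
    have hXne : (X - 1 : Polynomial (ZMod 2)) ≠ 0 := by
      rw [hXC]; exact Polynomial.X_sub_C_ne_zero 1
    have h2 : (fm m).natDegree = m := by
      rw [fm, ← Polynomial.C_1]; exact Polynomial.natDegree_X_pow_sub_C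
    have h3 : (X - 1 : Polynomial (ZMod 2)).natDegree = 1 := by
      rw [hXC]; exact Polynomial.natDegree_X_sub_C 1
    have h4 := Polynomial.natDegree_mul hXne hgne
    rw [← Statement13Aux.fm_eq, h2, h3] at h4
    omega
  -- the factor family indexed by Option (Fin h)
  set q : Option (Fin h) → Polynomial (ZMod 2) := fun o => o.elim (X - 1) p with hqdef
  have hirrq : ∀ i, Irreducible (q i) := by
    rintro (_ | j)
    · have hXC : (X - 1 : Polynomial (ZMod 2)) = X - C 1 := by rw [Polynomial.C_1]
      rw [show q none = X - 1 from rfl, hXC]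
      exact Polynomial.irreducible_X_sub_C 1
    · exact hirr j
  have hcop : ∀ i j, i ≠ j → IsCoprime (q i) (q j) := by
    intro i j hij
    refine ((hirrq i).coprime_iff_not_dvd).mpr ?_
    intro hdvd
    have heq : q i = q j :=
      Statement13Aux.eq_of_associated ((hirrq i).associated_of_dvd (hirrq j) hdvd)
    match i, j with
    | none, none => exact hij rfl
    | some a, some b => exact hij (by rw [hdist heq])
    | none, some b =>
        exact Statement13Aux.pj_ne_X_sub_one hm hirr hfact b
          (dvd_of_eq (heq.symm : p b = X - 1))
    | some a, none =>
        exact Statement13Aux.pj_ne_X_sub_one hm hirr hfact a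
          (dvd_of_eq (heq : p a = X - 1))
  have hqprod : ∏ i, q i = fm m := by
    rw [Fintype.prod_option]
    show (X - 1) * ∏ j, p j = fm m
    rw [hfact, ← Statement13Aux.fm_eq]
  have hspan : Ideal.span {fm m} = ⨅ i, Ideal.span {q i} := by
    rw [Ideal.iInf_span_singleton hcop, hqprod]
  have hIcop : Pairwise (Function.onFun IsCoprime fun i => Ideal.span {q i}) := fun i j hij =>
    (Ideal.isCoprime_span_singleton_iff _ _).mpr (hcop i j hij)
  let Φ : R2 m ≃+* ∀ i, Polynomial (ZMod 2) ⧸ Ideal.span {q i} :=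
    (Ideal.quotEquivOfEq hspan).trans (Ideal.quotientInfRingEquivPiQuotient _ hIcop)
  have hΦ : ∀ (r : R2 m) (i : Option (Fin h)),
      Φ r i = Ideal.Quotient.mk (Ideal.span {q i}) (rep2 m r) := by
    intro r i
    conv_lhs => rw [← Statement13Aux.mk2_rep2 hmpos r]
    have key : Φ (mk2 m (rep2 m r)) =
        Ideal.quotientInfToPiQuotient _ (Ideal.Quotient.mk _ (rep2 m r)) := by
      show Ideal.quotientInfRingEquivPiQuotient _ hIcop
        (Ideal.quotEquivOfEq hspan (Ideal.Quotient.mk _ (rep2 m r))) = _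
      rw [Ideal.quotEquivOfEq_mk]
      rfl
    rw [key, Ideal.quotientInfToPiQuotient_mk]
  have hzero : ∀ (r : R2 m) (i : Option (Fin h)),
      q i ∣ rep2 m r ↔ Φ r i = 0 := by
    intro r i
    rw [hΦ, Ideal.Quotient.eq_zero_iff_mem, Ideal.mem_span_singleton]
  have hz0 : ∀ r : R2 m, (X - 1) ∣ rep2 m r ↔ Φ r none = 0 := fun r => hzero r none
  have hzj : ∀ (r : R2 m) (j : Fin h), p j ∣ rep2 m r ↔ Φ r (some j) = 0 :=
    fun r j => hzero r (some j)
  -- the equivalence of subtypes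
  let e : {w : R2 m × R2 m // w.1 ∈ Jm m ∧ w.2 ∈ Jm m ∧
        EuclideanDomain.gcd (rep2 m w.1) (EuclideanDomain.gcd (rep2 m w.2) (fm m))
          = X - 1} ≃
      {uv : (∀ i, Polynomial (ZMod 2) ⧸ Ideal.span {q i}) ×
            (∀ i, Polynomial (ZMod 2) ⧸ Ideal.span {q i}) //
        uv.1 none = 0 ∧ uv.2 none = 0 ∧
          ∀ j : Fin h, ¬(uv.1 (some j) = 0 ∧ uv.2 (some j) = 0)} := by
    refine (Equiv.prodCongr Φ.toEquiv Φ.toEquiv).subtypeEquiv (fun w => ?_)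
    rw [Statement13Aux.mem_Jm_iff hmpos, Statement13Aux.mem_Jm_iff hmpos,
      Statement13Aux.gcd_char hm hirr hfact]
    simp only [hz0, hzj, Equiv.prodCongr_apply, RingEquiv.toEquiv_eq_coe,
      EquivLike.coe_coe, Prod.map_fst, Prod.map_snd]
    tauto
  -- split off the `none` coordinate
  let E : {uv : (∀ i, Polynomial (ZMod 2) ⧸ Ideal.span {q i}) ×
            (∀ i, Polynomial (ZMod 2) ⧸ Ideal.span {q i}) //
        uv.1 none = 0 ∧ uv.2 none = 0 ∧
          ∀ j : Fin h, ¬(uv.1 (some j) = 0 ∧ uv.2 (some j) = 0)} ≃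
      ∀ j : Fin h, {st : (Polynomial (ZMod 2) ⧸ Ideal.span {q (some j)}) ×
          (Polynomial (ZMod 2) ⧸ Ideal.span {q (some j)}) //
        ¬(st.1 = 0 ∧ st.2 = 0)} :=
    { toFun := fun x j => ⟨(x.1.1 (some j), x.1.2 (some j)), x.2.2.2 j⟩
      invFun := fun y =>
        ⟨(fun i => Option.casesOn i 0 (fun j => (y j).1.1),
          fun i => Option.casesOn i 0 (fun j => (y j).1.2)),
          rfl, rfl, fun j => (y j).2⟩
      left_inv := by
        rintro ⟨⟨u, v⟩, hu, hv, hw⟩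
        refine Subtype.ext (Prod.ext (funext fun i => ?_) (funext fun i => ?_)) <;>
          cases i
        · exact hu.symm
        · rfl
        · exact hv.symm
        · rfl
      right_inv := by
        intro y
        funext j
        exact Subtype.ext rfl }
  -- cardinality of each factor
  have hmon : ∀ j : Fin h, (p j).Monic :=
    fun j => Statement13Aux.monic_of_ne_zero (hirr j).ne_zero
  have hSj : ∀ j : Fin h,
      Nat.card {st : (Polynomial (ZMod 2) ⧸ Ideal.span {q (some j)}) ×
          (Polynomial (ZMod 2) ⧸ Ideal.span {q (some j)}) //
        ¬(st.1 = 0 ∧ st.2 = 0)} = 2 ^ (2 * (p j).natDegree) - 1 := by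
    intro j
    letI : Fintype (AdjoinRoot (p j)) :=
      Module.fintypeOfFintype (AdjoinRoot.powerBasis' (hmon j)).basis
    have hcK : Fintype.card (AdjoinRoot (p j)) = 2 ^ (p j).natDegree := by
      rw [Module.card_eq_pow_finrank (K := ZMod 2) (V := AdjoinRoot (p j)),
        (AdjoinRoot.powerBasis' (hmon j)).finrank, ZMod.card]
      rfl
    letI : Fintype (Polynomial (ZMod 2) ⧸ Ideal.span {q (some j)}) :=
      (inferInstance : Fintype (AdjoinRoot (p j)))
    haveI : Unique {st : (Polynomial (ZMod 2) ⧸ Ideal.span {q (some j)}) ×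
          (Polynomial (ZMod 2) ⧸ Ideal.span {q (some j)}) //
        st.1 = 0 ∧ st.2 = 0} :=
      { default := ⟨(0, 0), rfl, rfl⟩
        uniq := by
          rintro ⟨⟨x, y⟩, hx, hy⟩
          exact Subtype.ext (Prod.ext hx hy) }
    have hone : Fintype.card {st : (Polynomial (ZMod 2) ⧸ Ideal.span {q (some j)}) ×
          (Polynomial (ZMod 2) ⧸ Ideal.span {q (some j)}) //
        st.1 = 0 ∧ st.2 = 0} = 1 := Fintype.card_unique
    have hcK' : Fintype.card (Polynomial (ZMod 2) ⧸ Ideal.span {q (some j)}) =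
        2 ^ (p j).natDegree := hcK
    rw [Nat.card_eq_fintype_card, Fintype.card_subtype_compl, hone, Fintype.card_prod,
      hcK', ← pow_add, two_mul]
  -- total count
  have hT : Nat.card {w : R2 m × R2 m // w.1 ∈ Jm m ∧ w.2 ∈ Jm m ∧
        EuclideanDomain.gcd (rep2 m w.1) (EuclideanDomain.gcd (rep2 m w.2) (fm m))
          = X - 1} = ∏ j, (2 ^ (2 * (p j).natDegree) - 1) := by
    rw [Nat.card_congr (e.trans E), Nat.card_pi]
    exact Finset.prod_congr rfl (fun j _ => hSj j)
  rw [hT]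
  -- real arithmetic
  push_cast [Nat.cast_prod]
  have hterm : ∀ j : Fin h, ((2 ^ (2 * (p j).natDegree) - 1 : ℕ) : ℝ) =
      (2 : ℝ) ^ (2 * (p j).natDegree) *
        (1 - (2 : ℝ) ^ (-(2 * ((p j).natDegree : ℝ)))) := by
    intro j
    have h1 : (1 : ℕ) ≤ 2 ^ (2 * (p j).natDegree) := Nat.one_le_two_pow
    rw [Nat.cast_sub h1]
    have h2 : (2 : ℝ) ^ (-(2 * ((p j).natDegree : ℝ)))
        = ((2 : ℝ) ^ (2 * (p j).natDegree : ℕ))⁻¹ := by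
      rw [← Real.rpow_natCast 2 (2 * (p j).natDegree), ← Real.rpow_neg (by norm_num)]
      push_cast
      ring_nf
    rw [h2, mul_sub, mul_inv_cancel₀ (by positivity), mul_one]
    push_cast
    ring
  rw [Finset.prod_congr rfl (fun j _ => hterm j), Finset.prod_mul_distrib,
    Finset.prod_pow_eq_pow_sum]
  congr 2
  rw [← Finset.mul_sum, hd_sum]

end
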